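/- For every linear form L ∈ ℂ[x₀, x₁, x₂, x₃, x₄]₁ and every homogeneous cubic form F ∈ ℂ[x₀, x₁, x₂, x₃, x₄]₃, the quartic L·F satisfies dim H_{∂²(L·F)} ≤ 14; equivalently, the 15×15 middle catalecticant matrix of L·F (the matrix of the linear map sending degree-2 differential operators to the corresponding second-order partial derivatives of L·F) has vanishing determinant. -/

import Mathlib

open MvPolynomial

/-- Iterated partial derivative of a polynomial along a list of variables. -/
noncomputable def derivList {σ : Type*} (l : List σ) (F : MvPolynomial σ ℂ) :
    MvPolynomial σ ℂ :=
  l.foldl (fun G i => MvPolynomial.pderiv i G) F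

/-- `Hspan s F` is the linear span of all `s`-th order partial derivatives of `F`. -/
noncomputable def Hspan {σ : Type*} (s : ℕ) (F : MvPolynomial σ ℂ) :
    Submodule ℂ (MvPolynomial σ ℂ) :=
  Submodule.span ℂ {P | ∃ l : List σ, l.length = s ∧ P = derivList l F}

lemma my_degree_add {σ : Type*} (a b : σ →₀ ℕ) : (a + b).degree = a.degree + b.degree := by
  simp [Finsupp.degree_eq_weight_one, map_add]

lemma my_degree_single {σ : Type*} (i : σ) (n : ℕ) : (Finsupp.single i n).degree = n := by
  classical
  rcases eq_or_ne n 0 with rfl | hn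
  · simp [Finsupp.degree]
  · exact Finsupp.degree_single i n

lemma degree_sub_single {σ : Type*} (d : σ →₀ ℕ) (i : σ) (hi : d i ≠ 0) :
    (d - Finsupp.single i 1).degree + 1 = d.degree := by
  have h : (d - Finsupp.single i 1) + Finsupp.single i 1 = d := by
    ext j
    classical
    by_cases hj : j = i
    · subst hj
      simp [Nat.sub_add_cancel (Nat.one_le_iff_ne_zero.2 hi)]
    · simp [Finsupp.single_apply, Ne.symm hj, hj]
  conv_rhs => rw [← h]
  rw [my_degree_add, my_degree_single]

lemma pderiv_isHomogeneous {σ : Type*} {φ : MvPolynomial σ ℂ} {n : ℕ}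
    (h : φ.IsHomogeneous (n + 1)) (i : σ) : (pderiv i φ).IsHomogeneous n := by
  classical
  rw [φ.as_sum, map_sum]
  apply IsHomogeneous.sum
  intro d hd
  rw [pderiv_monomial]
  by_cases hdi : d i = 0
  · simp [hdi]
    exact isHomogeneous_zero _ _ _
  · apply isHomogeneous_monomial
    have hdeg : d.degree = n + 1 := by
      have := h (mem_support_iff.1 hd)
      rw [Finsupp.degree_eq_weight_one]; exact this
    have := degree_sub_single d i hdi
    omega

lemma monomial_single_one {σ : Type*} (k : σ) (c : ℂ) :
    monomial (Finsupp.single k 1) c = c • (X k : MvPolynomial σ ℂ) := by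
  rw [X, smul_monomial, smul_eq_mul, mul_one]

lemma hom_one_mem_span {σ : Type*} {P : MvPolynomial σ ℂ} (h : P.IsHomogeneous 1) :
    P ∈ Submodule.span ℂ (Set.range (X : σ → MvPolynomial σ ℂ)) := by
  classical
  rw [P.as_sum]
  apply Submodule.sum_mem
  intro d hd
  have hdeg : d.degree = 1 := by
    have := h (mem_support_iff.1 hd)
    rw [Finsupp.degree_eq_weight_one]; exact this
  have hne : d ≠ 0 := by
    intro h0; rw [h0] at hdeg; simp [Finsupp.degree] at hdeg
  obtain ⟨k, hk⟩ := Finsupp.ne_iff.1 hne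
  simp only [Finsupp.coe_zero, Pi.zero_apply] at hk
  have hdk : d k = 1 := le_antisymm (hdeg ▸ Finsupp.le_degree k d) (Nat.one_le_iff_ne_zero.2 hk)
  have hd1 : d = Finsupp.single k 1 := by
    have hrest : (d - Finsupp.single k 1).degree = 0 := by
      have := degree_sub_single d k hk
      omega
    have h0 : d - Finsupp.single k 1 = 0 := (Finsupp.degree_eq_zero_iff _).1 hrest
    ext j
    by_cases hj : j = k
    · subst hj; simp [hdk]
    · have := Finsupp.ext_iff.1 h0 j
      simpa [Finsupp.single_apply, Ne.symm hj, hj] using this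
  rw [hd1, monomial_single_one]
  exact Submodule.smul_mem _ _ (Submodule.subset_span ⟨k, rfl⟩)

lemma hom_zero_eq_C {σ : Type*} {P : MvPolynomial σ ℂ} (h : P.IsHomogeneous 0) :
    P = C (coeff 0 P) := by
  classical
  ext d
  by_cases hd : d = 0
  · subst hd; simp
  · rw [coeff_C, if_neg (Ne.symm hd)]
    exact h.coeff_eq_zero (fun h0 => hd ((Finsupp.degree_eq_zero_iff d).1 h0))

lemma pderiv_of_hom_one {σ : Type*} {L : MvPolynomial σ ℂ} (hL : L.IsHomogeneous 1) (i : σ) :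
    pderiv i L = C (coeff 0 (pderiv i L)) :=
  hom_zero_eq_C (pderiv_isHomogeneous (by simpa using hL) i)

/-- For every linear form `L` and cubic form `F` in
`ℂ[x₀,…,x₄]`, the quartic `L·F` satisfies `dim H_{∂²(L·F)} ≤ 14`, i.e. its 15×15
middle catalecticant matrix is singular. -/
theorem osculating_in_secant_n4 (L F : MvPolynomial (Fin 5) ℂ)
    (hL : L.IsHomogeneous 1) (hF : F.IsHomogeneous 3) :
    Module.finrank ℂ (Hspan 2 (L * F)) ≤ 14 := by
  classical
  set g : Fin 5 ⊕ Fin 5 → MvPolynomial (Fin 5) ℂ :=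
    Sum.elim (fun k => pderiv k F) (fun k => L * X k) with hg
  have hW : Hspan 2 (L * F) ≤ Submodule.span ℂ (Set.range g) := by
    rw [Hspan, Submodule.span_le]
    rintro P ⟨l, hl, rfl⟩
    obtain ⟨i, j, rfl⟩ := List.length_eq_two.1 hl
    have hderiv : derivList [i, j] (L * F) = pderiv j (pderiv i (L * F)) := rfl
    rw [hderiv, pderiv_mul, map_add, pderiv_mul, pderiv_mul]
    have hiL := pderiv_of_hom_one hL i
    have hjL := pderiv_of_hom_one hL j
    have h0 : pderiv j (pderiv i L) = 0 := by rw [hiL, pderiv_C]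
    rw [h0, zero_mul, zero_add]
    refine Submodule.add_mem _ ?_ (Submodule.add_mem _ ?_ ?_)
    · rw [hiL, ← smul_eq_C_mul]
      exact Submodule.smul_mem _ _ (Submodule.subset_span ⟨Sum.inl j, rfl⟩)
    · rw [hjL, ← smul_eq_C_mul]
      exact Submodule.smul_mem _ _ (Submodule.subset_span ⟨Sum.inl i, rfl⟩)
    · have h2 : (pderiv j (pderiv i F)).IsHomogeneous 1 :=
        pderiv_isHomogeneous (pderiv_isHomogeneous (by simpa using hF) i) j
      have hmem := hom_one_mem_span h2
      have hap := Submodule.apply_mem_span_image_of_mem_span (LinearMap.mulLeft ℂ L) hmem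
      refine Submodule.span_mono ?_ hap
      rintro _ ⟨_, ⟨k, rfl⟩, rfl⟩
      exact ⟨Sum.inr k, rfl⟩
  have hfin : FiniteDimensional ℂ (Submodule.span ℂ (Set.range g)) :=
    FiniteDimensional.span_of_finite ℂ (Set.finite_range g)
  have h1 : Module.finrank ℂ (Hspan 2 (L * F)) ≤
      Module.finrank ℂ (Submodule.span ℂ (Set.range g)) := Submodule.finrank_mono hW
  have h2 : Module.finrank ℂ (Submodule.span ℂ (Set.range g)) ≤ 10 := by
    have := finrank_range_le_card (R := ℂ) g
    simpa [Set.finrank] using this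
  omega
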